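/- Let D and K be vector spaces over ℂ and H = D × K. For F ∈ End(H), write F^{DD} : D → D, F^{DK} : K → D, F^{KD} : D → K, F^{KK} : K → K for the block components of F with respect to the canonical injections and projections. For F ∈ End(H) and A ∈ Hom(D, K), define L_F(A) := −F^{KD} − F^{KK} ∘ A + A ∘ F^{DD} + A ∘ F^{DK} ∘ A, and define the directional derivative of L_F at A in direction B ∈ Hom(D,K) by δ_A L_F(B) := −F^{KK} ∘ B + B ∘ F^{DD} + B ∘ F^{DK} ∘ A + A ∘ F^{DK} ∘ B. Then for all F, G ∈ End(H) and all A ∈ Hom(D,K): δ_A L_G(L_F(A)) − δ_A L_F(L_G(A)) = L_{[F,G]}(A), where [F,G] = F ∘ G − G ∘ F. (This is the identity expressing that F ↦ L_F defines an action of the Lie algebra End(H) by vector fields on the affine chart Hom(D,K).) -/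
import Mathlib

section

variable {D K : Type*} [AddCommGroup D] [Module ℂ D] [AddCommGroup K] [Module ℂ K]

/-- The block component `F^{DD} : D → D` of `F ∈ End(D × K)`. -/
noncomputable def blockDD (F : (D × K) →ₗ[ℂ] (D × K)) : D →ₗ[ℂ] D :=
  LinearMap.fst ℂ D K ∘ₗ F ∘ₗ LinearMap.inl ℂ D K

/-- The block component `F^{DK} : K → D` of `F ∈ End(D × K)`. -/
noncomputable def blockDK (F : (D × K) →ₗ[ℂ] (D × K)) : K →ₗ[ℂ] D :=
  LinearMap.fst ℂ D K ∘ₗ F ∘ₗ LinearMap.inr ℂ D K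

/-- The block component `F^{KD} : D → K` of `F ∈ End(D × K)`. -/
noncomputable def blockKD (F : (D × K) →ₗ[ℂ] (D × K)) : D →ₗ[ℂ] K :=
  LinearMap.snd ℂ D K ∘ₗ F ∘ₗ LinearMap.inl ℂ D K

/-- The block component `F^{KK} : K → K` of `F ∈ End(D × K)`. -/
noncomputable def blockKK (F : (D × K) →ₗ[ℂ] (D × K)) : K →ₗ[ℂ] K :=
  LinearMap.snd ℂ D K ∘ₗ F ∘ₗ LinearMap.inr ℂ D K

/-- Splitting a vector of `D × K` into its two components under a linear map. -/
lemma split (F : (D × K) →ₗ[ℂ] (D × K)) (p : D × K) :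
    F p = F (p.1, 0) + F (0, p.2) := by
  rw [← map_add]; simp

lemma blockDD_sub (F G : (D × K) →ₗ[ℂ] (D × K)) :
    blockDD (F - G) = blockDD F - blockDD G := by
  simp [blockDD, LinearMap.comp_sub, LinearMap.sub_comp]

lemma blockDK_sub (F G : (D × K) →ₗ[ℂ] (D × K)) :
    blockDK (F - G) = blockDK F - blockDK G := by
  simp [blockDK, LinearMap.comp_sub, LinearMap.sub_comp]

lemma blockKD_sub (F G : (D × K) →ₗ[ℂ] (D × K)) :
    blockKD (F - G) = blockKD F - blockKD G := by
  simp [blockKD, LinearMap.comp_sub, LinearMap.sub_comp]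

lemma blockKK_sub (F G : (D × K) →ₗ[ℂ] (D × K)) :
    blockKK (F - G) = blockKK F - blockKK G := by
  simp [blockKK, LinearMap.comp_sub, LinearMap.sub_comp]

lemma blockDD_comp (F G : (D × K) →ₗ[ℂ] (D × K)) :
    blockDD (F ∘ₗ G) = blockDD F ∘ₗ blockDD G + blockDK F ∘ₗ blockKD G := by
  ext x; simp [blockDD, blockDK, blockKD]; rw [split F (G (x,0))]; simp

lemma blockDK_comp (F G : (D × K) →ₗ[ℂ] (D × K)) :
    blockDK (F ∘ₗ G) = blockDD F ∘ₗ blockDK G + blockDK F ∘ₗ blockKK G := by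
  ext x; simp [blockDD, blockDK, blockKK]; rw [split F (G (0,x))]; simp

lemma blockKD_comp (F G : (D × K) →ₗ[ℂ] (D × K)) :
    blockKD (F ∘ₗ G) = blockKD F ∘ₗ blockDD G + blockKK F ∘ₗ blockKD G := by
  ext x; simp [blockDD, blockKD, blockKK]; rw [split F (G (x,0))]; simp

lemma blockKK_comp (F G : (D × K) →ₗ[ℂ] (D × K)) :
    blockKK (F ∘ₗ G) = blockKD F ∘ₗ blockDK G + blockKK F ∘ₗ blockKK G := by
  ext x; simp [blockDK, blockKD, blockKK]; rw [split F (G (0,x))]; simp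

/-- The vector field of the `𝔤𝔩`-action in the chart `Hom(D,K)` of the Sato Grassmannian:
`L_F(A) = −F^{KD} − F^{KK} ∘ A + A ∘ F^{DD} + A ∘ F^{DK} ∘ A`. -/
noncomputable def glFlow (F : (D × K) →ₗ[ℂ] (D × K)) (A : D →ₗ[ℂ] K) : D →ₗ[ℂ] K :=
  -blockKD F - blockKK F ∘ₗ A + A ∘ₗ blockDD F + A ∘ₗ blockDK F ∘ₗ A

/-- The directional derivative of `A ↦ L_F(A)` at `A` in direction `B`:
`δ_A L_F(B) = −F^{KK} ∘ B + B ∘ F^{DD} + B ∘ F^{DK} ∘ A + A ∘ F^{DK} ∘ B`. -/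
noncomputable def glFlowDeriv (F : (D × K) →ₗ[ℂ] (D × K)) (A B : D →ₗ[ℂ] K) :
    D →ₗ[ℂ] K :=
  -(blockKK F ∘ₗ B) + B ∘ₗ blockDD F + B ∘ₗ blockDK F ∘ₗ A + A ∘ₗ blockDK F ∘ₗ B

/-- The identity expressing that `F ↦ L_F` defines an action of the Lie algebra `End(D × K)`
by vector fields on the affine chart `Hom(D,K)`: for all `F, G` and all `A`,
`δ_A L_G(L_F(A)) − δ_A L_F(L_G(A)) = L_{[F,G]}(A)`, where `[F,G] = F ∘ G − G ∘ F`. -/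
theorem glFlow_bracket (F G : (D × K) →ₗ[ℂ] (D × K)) (A : D →ₗ[ℂ] K) :
    glFlowDeriv G A (glFlow F A) - glFlowDeriv F A (glFlow G A) =
      glFlow (F ∘ₗ G - G ∘ₗ F) A := by
  simp only [glFlow, glFlowDeriv, LinearMap.sub_comp, LinearMap.comp_sub,
    blockDD_sub, blockDK_sub, blockKD_sub, blockKK_sub,
    blockDD_comp, blockDK_comp, blockKD_comp, blockKK_comp]
  simp only [LinearMap.add_comp, LinearMap.comp_add, LinearMap.sub_comp,
    LinearMap.comp_sub, LinearMap.neg_comp, LinearMap.comp_neg,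
    LinearMap.comp_assoc]
  abel

end
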